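/- Let F be an asymmetric norm on ℝⁿ whose closed unit ball {y : F(y) ≤ 1} is a strictly convex set, let α ∈ ℝⁿ with α ≠ 0, and suppose the function α ↦ F_*(α)² is differentiable at α with gradient g. Then F(g) > 0 and g/F(g) is the unique point of the unit sphere {y : F(y) = 1} at which the function y ↦ ⟨α, y⟩ attains its maximum over the unit sphere. -/
import Mathlib


open scoped RealInnerProductSpace

/-- `ℝⁿ` with the Euclidean inner product. -/
abbrev En (n : ℕ) := EuclideanSpace ℝ (Fin n)

/-- An asymmetric norm on `ℝⁿ`. -/
def IsAsymNorm {n : ℕ} (F : En n → ℝ) : Prop :=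
  (∀ y, 0 ≤ F y) ∧ (∀ y, F y = 0 ↔ y = 0) ∧
  (∀ l : ℝ, 0 < l → ∀ y, F (l • y) = l * F y) ∧
  (∀ y₁ y₂, F (y₁ + y₂) ≤ F y₁ + F y₂)

/-- The dual asymmetric norm `F_*(α) = sup {⟨α, y⟩ : F y ≤ 1}`. -/
noncomputable def dualNorm {n : ℕ} (F : En n → ℝ) (α : En n) : ℝ :=
  sSup ((fun y => ⟪α, y⟫) '' {y | F y ≤ 1})

/-- The subdifferential of `F²` at `y`. -/
def subdiffSq {n : ℕ} (F : En n → ℝ) (y : En n) : Set (En n) :=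
  {α | ∀ z, (F y) ^ 2 + ⟪α, z - y⟫ ≤ (F z) ^ 2}

/-- Subadditivity over a finite sum. -/
theorem asym_sum_le {n : ℕ} (F : En n → ℝ)
    (hFzero : F 0 = 0)
    (hFadd : ∀ y₁ y₂, F (y₁ + y₂) ≤ F y₁ + F y₂)
    {ι : Type*} (s : Finset ι) (f : ι → En n) :
    F (∑ i ∈ s, f i) ≤ ∑ i ∈ s, F (f i) := by
  classical
  induction s using Finset.cons_induction with
  | empty => simp [hFzero]
  | cons a s ha ih =>
    rw [Finset.sum_cons, Finset.sum_cons]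
    exact le_trans (hFadd _ _) (by linarith)

set_option maxHeartbeats 1000000 in
/-- If the unit ball of `F` is strictly convex, `α ≠ 0`, and `F_*²` has gradient `g` at
`α`, then `g / F(g)` is the unique maximizer of `y ↦ ⟨α, y⟩` on the unit sphere of `F`. -/
theorem unique_maximizer_on_sphere {n : ℕ} (F : En n → ℝ) (hF : IsAsymNorm F)
    (hconv : StrictConvex ℝ {y : En n | F y ≤ 1})
    (α : En n) (hα : α ≠ 0) (g : En n)
    (hg : HasGradientAt (fun β => (dualNorm F β) ^ 2) g α) :
    0 < F g ∧ F ((F g)⁻¹ • g) = 1 ∧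
      (∀ y, F y = 1 → ⟪α, y⟫ ≤ ⟪α, (F g)⁻¹ • g⟫) ∧
      (∀ y, F y = 1 → ⟪α, y⟫ = ⟪α, (F g)⁻¹ • g⟫ → y = (F g)⁻¹ • g) := by
  obtain ⟨hF0, hFzero, hFhom, hFadd⟩ := hF
  have hF00 : F 0 = 0 := (hFzero 0).mpr rfl
  rcases Nat.eq_zero_or_pos n with hn | hn
  · subst hn
    exact absurd (Subsingleton.elim α 0) hα
  -- coordinate bound
  have hcoord : ∀ (y : En n) (i : Fin n), |y i| ≤ ‖y‖ := by
    intro y i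
    have h : |y i| ^ 2 ≤ ‖y‖ ^ 2 := by
      rw [EuclideanSpace.norm_eq, Real.sq_sqrt (by positivity)]
      calc |y i| ^ 2 = ‖y i‖ ^ 2 := by rw [Real.norm_eq_abs]
        _ ≤ ∑ j : Fin n, ‖y j‖ ^ 2 :=
            Finset.single_le_sum (f := fun j => ‖y j‖ ^ 2) (fun j _ => by positivity) (Finset.mem_univ i)
    nlinarith [abs_nonneg (y i), norm_nonneg y]
  -- upper Lipschitz bound
  set C : ℝ := (∑ i : Fin n, (F (EuclideanSpace.single i 1) + F (-EuclideanSpace.single i 1))) + 1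
    with hC
  have hCpos : 0 < C := by
    have : 0 ≤ ∑ i : Fin n, (F (EuclideanSpace.single i 1) + F (-EuclideanSpace.single i 1)) :=
      Finset.sum_nonneg fun i _ => add_nonneg (hF0 _) (hF0 _)
    linarith
  have hub : ∀ y : En n, F y ≤ C * ‖y‖ := by
    intro y
    have hy : ∑ i : Fin n, y i • EuclideanSpace.single i (1:ℝ) = y := by
      simpa using (EuclideanSpace.basisFun (Fin n) ℝ).sum_repr y
    calc F y = F (∑ i : Fin n, y i • EuclideanSpace.single i (1:ℝ)) := by rw [hy]
      _ ≤ ∑ i : Fin n, F (y i • EuclideanSpace.single i (1:ℝ)) :=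
          asym_sum_le F hF00 hFadd _ _
      _ ≤ ∑ i : Fin n, ‖y‖ * (F (EuclideanSpace.single i 1) + F (-EuclideanSpace.single i 1)) := by
          apply Finset.sum_le_sum
          intro i _
          rcases lt_trichotomy (y i) 0 with h | h | h
          · have he : y i • EuclideanSpace.single i (1:ℝ)
                = (-(y i)) • (-EuclideanSpace.single i 1) := by
              simp [smul_neg]
            rw [he, hFhom _ (by linarith) _]
            have h1 : -(y i) ≤ ‖y‖ := by
              have := hcoord y i; rw [abs_of_neg h] at this; exact this
            nlinarith [hF0 (-EuclideanSpace.single i (1:ℝ)),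
              hF0 (EuclideanSpace.single i (1:ℝ)), norm_nonneg y]
          · rw [h, zero_smul, hF00]
            exact mul_nonneg (norm_nonneg y) (add_nonneg (hF0 _) (hF0 _))
          · rw [hFhom _ h _]
            have h1 : y i ≤ ‖y‖ := le_trans (le_abs_self _) (hcoord y i)
            nlinarith [hF0 (-EuclideanSpace.single i (1:ℝ)),
              hF0 (EuclideanSpace.single i (1:ℝ)), norm_nonneg y]
      _ = (∑ i : Fin n, (F (EuclideanSpace.single i 1) + F (-EuclideanSpace.single i 1))) * ‖y‖ := by
          rw [Finset.sum_mul]; congr 1; ext i; ring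
      _ ≤ C * ‖y‖ := by
          apply mul_le_mul_of_nonneg_right _ (norm_nonneg y)
          rw [hC]; linarith
  -- continuity of F
  have hFcont : Continuous F := by
    rw [Metric.continuous_iff]
    intro y ε hε
    refine ⟨ε / C, by positivity, fun z hz => ?_⟩
    rw [dist_eq_norm] at hz
    have h1 : F z ≤ F y + C * ‖z - y‖ := by
      have he : y + (z - y) = z := by abel
      calc F z = F (y + (z - y)) := by rw [he]
        _ ≤ F y + F (z - y) := hFadd _ _
        _ ≤ F y + C * ‖z - y‖ := by linarith [hub (z - y)]
    have h2 : F y ≤ F z + C * ‖z - y‖ := by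
      have he : z + (y - z) = y := by abel
      have hn2 : ‖y - z‖ = ‖z - y‖ := by rw [← neg_sub, norm_neg]
      calc F y = F (z + (y - z)) := by rw [he]
        _ ≤ F z + F (y - z) := hFadd _ _
        _ ≤ F z + C * ‖z - y‖ := by rw [← hn2]; linarith [hub (y - z)]
    have h3 : C * ‖z - y‖ < ε := by
      rw [lt_div_iff₀ hCpos] at hz; linarith [hz]
    rw [Real.dist_eq, abs_lt]
    constructor <;> linarith
  -- lower bound
  haveI : Nontrivial (En n) := by
    refine ⟨EuclideanSpace.single (⟨0, hn⟩ : Fin n) (1:ℝ), 0, fun h => ?_⟩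
    have := congrArg norm h
    simp [EuclideanSpace.norm_single] at this
  obtain ⟨y₀, hy₀s, hy₀min⟩ := (isCompact_sphere (0 : En n) 1).exists_isMinOn
    (NormedSpace.sphere_nonempty.mpr zero_le_one) hFcont.continuousOn
  have hy₀norm : ‖y₀‖ = 1 := by simpa using hy₀s
  set c : ℝ := F y₀ with hc
  have hcpos : 0 < c := by
    rcases (hF0 y₀).lt_or_eq with h | h
    · exact h
    · exfalso
      have h0 : y₀ = 0 := (hFzero y₀).mp h.symm
      rw [h0] at hy₀norm; simp at hy₀norm
  have hlow : ∀ y : En n, c * ‖y‖ ≤ F y := by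
    intro y
    rcases eq_or_ne y 0 with rfl | hy
    · simp [hF00]
    · have hny : 0 < ‖y‖ := norm_pos_iff.mpr hy
      have hu : ‖(‖y‖⁻¹ • y : En n)‖ = 1 := by
        rw [norm_smul]; simp [abs_of_pos (inv_pos.mpr hny), inv_mul_cancel₀ hny.ne']
      have hmin := hy₀min (by simpa using hu : (‖y‖⁻¹ • y : En n) ∈ Metric.sphere 0 1)
      have heq : F y = ‖y‖ * F (‖y‖⁻¹ • y) := by
        rw [← hFhom _ hny, smul_smul, mul_inv_cancel₀ hny.ne', one_smul]
      have hmin' : c ≤ F (‖y‖⁻¹ • y) := hmin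
      rw [heq]
      nlinarith [mul_le_mul_of_nonneg_left hmin' (norm_nonneg y)]
  -- the unit ball is compact
  set B : Set (En n) := {y | F y ≤ 1} with hB
  have hBclosed : IsClosed B := isClosed_le hFcont continuous_const
  have hBbdd : Bornology.IsBounded B := by
    apply (Metric.isBounded_closedBall (x := (0 : En n)) (r := c⁻¹)).subset
    intro y hy
    simp only [Metric.mem_closedBall, dist_zero_right]
    have hy1 : F y ≤ 1 := hy
    have hcc : c * c⁻¹ = 1 := mul_inv_cancel₀ hcpos.ne'
    nlinarith [hlow y, inv_pos.mpr hcpos]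
  have hBcomp : IsCompact B := Metric.isCompact_of_isClosed_isBounded hBclosed hBbdd
  have hBne : B.Nonempty := ⟨0, by simp [hB, hF00]⟩
  have hinner_cont : ∀ β : En n, Continuous fun y : En n => ⟪β, y⟫ := fun β =>
    continuous_const.inner continuous_id
  obtain ⟨yh, hyhB, hmax⟩ := hBcomp.exists_isMaxOn hBne (hinner_cont α).continuousOn
  have hmax' : ∀ y ∈ B, ⟪α, y⟫ ≤ ⟪α, yh⟫ := hmax
  set M : ℝ := ⟪α, yh⟫ with hM
  have hFα : 0 < F α := by
    rcases (hF0 α).lt_or_eq with h | h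
    · exact h
    · exact absurd ((hFzero α).mp h.symm) hα
  have hMpos : 0 < M := by
    have hz : ((F α)⁻¹ • α : En n) ∈ B := by
      simp only [hB, Set.mem_setOf_eq]
      rw [hFhom _ (inv_pos.mpr hFα), inv_mul_cancel₀ hFα.ne']
    have h1 := hmax' _ hz
    have h2 : ⟪α, (F α)⁻¹ • α⟫ = (F α)⁻¹ * ‖α‖ ^ 2 := by
      rw [real_inner_smul_right, real_inner_self_eq_norm_sq]
    have hα' : 0 < ‖α‖ := norm_pos_iff.mpr hα
    nlinarith [mul_pos (inv_pos.mpr hFα) (pow_pos hα' 2)]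
  have hyh1 : F yh = 1 := by
    by_contra h
    have hlt : F yh < 1 := lt_of_le_of_ne hyhB h
    have hyh0 : yh ≠ 0 := by
      intro h0
      rw [hM, h0, inner_zero_right] at hMpos
      exact lt_irrefl 0 hMpos
    have hFyh : 0 < F yh := lt_of_le_of_ne (hF0 yh) fun h' => hyh0 ((hFzero yh).mp h'.symm)
    have hz : ((F yh)⁻¹ • yh : En n) ∈ B := by
      simp only [hB, Set.mem_setOf_eq]
      rw [hFhom _ (inv_pos.mpr hFyh), inv_mul_cancel₀ hFyh.ne']
    have h1 := hmax' _ hz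
    rw [real_inner_smul_right] at h1
    have hcc : F yh * (F yh)⁻¹ = 1 := mul_inv_cancel₀ hFyh.ne'
    nlinarith [mul_le_mul_of_nonneg_left h1 hFyh.le]
  have hbdd : ∀ β : En n, BddAbove ((fun y => ⟪β, y⟫) '' B) := fun β =>
    (hBcomp.image (hinner_cont β)).bddAbove
  have hdual_ge : ∀ (β : En n) (y : En n), F y ≤ 1 → ⟪β, y⟫ ≤ dualNorm F β := fun β y hy =>
    le_csSup (hbdd β) ⟨y, hy, rfl⟩
  have hdual_nonneg : ∀ β : En n, 0 ≤ dualNorm F β := fun β => by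
    have := hdual_ge β 0 (by simp [hF00])
    simpa using this
  have hdualα : dualNorm F α = M := by
    apply IsGreatest.csSup_eq
    exact ⟨⟨yh, hyhB, rfl⟩, fun x ⟨y, hy, hxy⟩ => hxy ▸ hmax' y hy⟩
  -- the subgradient
  set v : En n := (2 * M) • yh with hv
  have hsubgrad : ∀ β : En n, dualNorm F α ^ 2 + ⟪v, β - α⟫ ≤ dualNorm F β ^ 2 := by
    intro β
    have h1 : ⟪β, yh⟫ ≤ dualNorm F β := hdual_ge β yh (le_of_eq hyh1)
    have h2 : 0 ≤ dualNorm F β := hdual_nonneg β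
    have h3 : ⟪v, β - α⟫ = 2 * M * (⟪β, yh⟫ - M) := by
      rw [hv, hM, real_inner_smul_left, inner_sub_right, real_inner_comm yh β,
        real_inner_comm yh α]
    rw [hdualα, h3]
    nlinarith [sq_nonneg (dualNorm F β - M), sq_nonneg (⟪β, yh⟫ - M)]
  -- gradient equals subgradient
  have hgv : g = v := by
    apply ext_inner_right ℝ
    intro w
    set ψ : ℝ → ℝ := fun t => dualNorm F (α + t • w) ^ 2 - t * ⟪v, w⟫ with hψ
    have hψmin : ∀ t, ψ 0 ≤ ψ t := by
      intro t
      have hs := hsubgrad (α + t • w)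
      have h4 : ⟪v, α + t • w - α⟫ = t * ⟪v, w⟫ := by
        rw [add_sub_cancel_left, real_inner_smul_right]
      rw [h4] at hs
      simp only [hψ, zero_smul, add_zero, zero_mul, sub_zero]
      linarith
    have hline : HasDerivAt (fun t : ℝ => α + t • w) w 0 := by
      simpa using ((hasDerivAt_id (0:ℝ)).smul_const w).const_add α
    have hcomp : HasDerivAt (fun t : ℝ => dualNorm F (α + t • w) ^ 2) ⟪g, w⟫ 0 := by
      have hfd' : HasFDerivAt (fun β => dualNorm F β ^ 2)
          ((InnerProductSpace.toDual ℝ (En n)) g) ((fun t : ℝ => α + t • w) 0) := by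
        have h0 : (fun t : ℝ => α + t • w) 0 = α := by simp
        rw [h0]; exact hg.hasFDerivAt
      have hcomp' := hfd'.comp_hasDerivAt (0:ℝ) hline
      rw [InnerProductSpace.toDual_apply_apply] at hcomp'
      exact hcomp'
    have hψd : HasDerivAt ψ (⟪g, w⟫ - ⟪v, w⟫) 0 := by
      have hlin : HasDerivAt (fun t : ℝ => t * ⟪v, w⟫) ⟪v, w⟫ 0 := by
        simpa using (hasDerivAt_id (0:ℝ)).mul_const ⟪v, w⟫
      exact hcomp.sub hlin
    have hloc : IsLocalMin ψ 0 := Filter.Eventually.of_forall hψmin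
    have hz := hloc.hasDerivAt_eq_zero hψd
    linarith [hz]
  -- compute F g
  have h2M : 0 < 2 * M := by linarith
  have hFg : F g = 2 * M := by
    rw [hgv, hv, hFhom _ h2M, hyh1, mul_one]
  have hrepr : (F g)⁻¹ • g = yh := by
    rw [hFg, hgv, hv, smul_smul, inv_mul_cancel₀ h2M.ne', one_smul]
  refine ⟨hFg ▸ h2M, by rw [hrepr]; exact hyh1, ?_, ?_⟩
  · intro y hy
    rw [hrepr]
    exact hmax' y (le_of_eq hy)
  · intro y hy hinner
    rw [hrepr] at hinner ⊢
    by_contra hne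
    have hmid := hconv (le_of_eq hy : y ∈ B) hyhB hne (by norm_num : (0:ℝ) < 1/2)
      (by norm_num : (0:ℝ) < 1/2) (by norm_num)
    set m : En n := (1/2 : ℝ) • y + (1/2 : ℝ) • yh with hm
    rw [mem_interior_iff_mem_nhds, Metric.mem_nhds_iff] at hmid
    obtain ⟨ε, hε, hball⟩ := hmid
    have hαn : 0 < ‖α‖ := norm_pos_iff.mpr hα
    set t : ℝ := ε / (2 * ‖α‖) with ht
    have htpos : 0 < t := by positivity
    have hp : (m + t • α : En n) ∈ B := by
      apply hball
      simp only [Metric.mem_ball]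
      rw [dist_eq_norm, add_sub_cancel_left, norm_smul, Real.norm_eq_abs, abs_of_pos htpos, ht]
      rw [div_mul_eq_mul_div, div_lt_iff₀ (by positivity)]
      nlinarith
    have hle := hmax' _ hp
    have hm_inner : ⟪α, m⟫ = M := by
      rw [hm, inner_add_right, real_inner_smul_right, real_inner_smul_right, hinner]
      ring
    rw [inner_add_right, hm_inner, real_inner_smul_right, real_inner_self_eq_norm_sq] at hle
    nlinarith [mul_pos htpos (pow_pos hαn 2)]
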